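/- For every n ∈ ℕ₀, the n-th iterated derivative of sinc is a bounded function on ℝ, and moreover (d^n/dx^n) sinc(x) tends to 0 as |x| → ∞ (i.e., along the filter where x → +∞ and where x → −∞). -/

import Mathlib

open Filter

/-- `sinc x = sin x / x` for `x ≠ 0`, `sinc 0 = 1`. -/
noncomputable def sinc (x : ℝ) : ℝ := if x = 0 then 1 else Real.sin x / x

lemma sinc_eq_re :
    sinc = fun x : ℝ => (dslope Complex.sin 0 x).re := by
  funext x
  by_cases hx : x = 0
  · subst hx
    simp [sinc, dslope_same, Complex.deriv_sin]
  · have hx' : (x : ℂ) ≠ 0 := by exact_mod_cast hx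
    rw [dslope_of_ne _ hx', slope_def_field]
    simp only [Complex.sin_zero, sub_zero, ← Complex.ofReal_sin, ← Complex.ofReal_div,
      Complex.ofReal_re, sinc, if_neg hx]

lemma contDiff_sinc : ContDiff ℝ ⊤ sinc := by
  have hF : Differentiable ℂ (dslope Complex.sin 0) := by
    rw [← differentiableOn_univ]
    exact (Complex.differentiableOn_dslope (Filter.univ_mem)).mpr
      Complex.differentiable_sin.differentiableOn
  have hFc : ContDiff ℂ ⊤ (dslope Complex.sin 0) := hF.contDiff
  have : ContDiff ℝ ⊤ (fun x : ℝ => (dslope Complex.sin 0 x).re) :=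
    Complex.reCLM.contDiff.comp ((hFc.restrict_scalars ℝ).comp Complex.ofRealCLM.contDiff)
  rwa [sinc_eq_re]

lemma abs_iteratedDeriv_sin_le (n : ℕ) (x : ℝ) : |iteratedDeriv n Real.sin x| ≤ 1 := by
  have key : ∀ m : ℕ, iteratedDeriv m Real.sin = Real.sin ∨
      iteratedDeriv m Real.sin = Real.cos ∨
      iteratedDeriv m Real.sin = (fun y => -Real.sin y) ∨
      iteratedDeriv m Real.sin = (fun y => -Real.cos y) := by
    intro m
    induction m with
    | zero => left; simp [iteratedDeriv_zero]
    | succ k ih =>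
      rw [iteratedDeriv_succ]
      rcases ih with h | h | h | h <;> rw [h]
      · right; left; exact Real.deriv_sin
      · right; right; left
        funext y; simp [Real.deriv_cos']
      · right; right; right
        funext y; simp [deriv.neg, Real.deriv_sin]
      · left
        funext y; simp [deriv.neg, Real.deriv_cos]
  rcases key n with h | h | h | h <;> rw [h] <;>
    simp [abs_le, Real.neg_one_le_sin, Real.sin_le_one, Real.neg_one_le_cos, Real.cos_le_one]

lemma abs_iteratedDeriv_inv_le (m : ℕ) {x : ℝ} (hx : 1 ≤ |x|) :
    |iteratedDeriv m (Inv.inv : ℝ → ℝ) x| ≤ (m.factorial : ℝ) / |x| := by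
  have hx0 : (0:ℝ) < |x| := lt_of_lt_of_le one_pos hx
  rw [iteratedDeriv_eq_iterate, iter_deriv_inv, abs_mul]
  have h1 : |∏ i ∈ Finset.range m, (-1 - (i : ℝ))| = (m.factorial : ℝ) := by
    rw [Finset.abs_prod]
    have he : ∀ i ∈ Finset.range m, |(-1 - (i : ℝ))| = ((i + 1 : ℕ) : ℝ) := by
      intro i _
      rw [abs_of_nonpos (by linarith [Nat.cast_nonneg (α := ℝ) i])]
      push_cast; ring
    rw [Finset.prod_congr rfl he, ← Nat.cast_prod, Finset.prod_range_add_one_eq_factorial]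
  rw [abs_mul, abs_pow, abs_neg, abs_one, one_pow, one_mul, Nat.abs_cast]
  have hexp : (-1 - (m:ℤ)) = -((m+1 : ℕ) : ℤ) := by push_cast; ring
  rw [hexp, zpow_neg, zpow_natCast, abs_inv, abs_pow]
  have h3 : |x| ≤ |x| ^ (m+1) := le_self_pow₀ hx (Nat.succ_ne_zero m)
  have h2 : (|x| ^ (m+1))⁻¹ ≤ |x|⁻¹ := inv_anti₀ hx0 h3
  calc (m.factorial : ℝ) * (|x| ^ (m+1))⁻¹ ≤ (m.factorial : ℝ) * |x|⁻¹ := by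
        exact mul_le_mul_of_nonneg_left h2 (Nat.cast_nonneg _)
    _ = (m.factorial : ℝ) / |x| := by rw [div_eq_mul_inv]

lemma key_bound (n : ℕ) {x : ℝ} (hx : 1 ≤ |x|) :
    |iteratedDeriv n sinc x| ≤
      (∑ i ∈ Finset.range (n+1), (n.choose i : ℝ) * ((n - i).factorial : ℝ)) / |x| := by
  have hx0 : x ≠ 0 := by
    intro h; rw [h, abs_zero] at hx; linarith
  set s : Set ℝ := {(0:ℝ)}ᶜ with hsdef
  have hs : IsOpen s := isOpen_compl_singleton
  have hxs : x ∈ s := hx0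
  have heq : sinc =ᶠ[nhds x] (fun y => Real.sin y * y⁻¹) := by
    filter_upwards [hs.mem_nhds hxs] with y hy
    have hy0 : y ≠ 0 := hy
    simp [sinc, if_neg hy0, div_eq_mul_inv]
  rw [heq.iteratedDeriv_eq n, ← Real.norm_eq_abs,
    ← norm_iteratedFDeriv_eq_norm_iteratedDeriv,
    ← iteratedFDerivWithin_of_isOpen (𝕜 := ℝ)
      (f := fun y : ℝ => Real.sin y * y⁻¹) n hs hxs]
  have hmul := norm_iteratedFDerivWithin_mul_le (𝕜 := ℝ) (N := (⊤ : WithTop ℕ∞))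
    (f := Real.sin) (g := (Inv.inv : ℝ → ℝ)) (s := s)
    (Real.contDiff_sin.contDiffOn) (contDiffOn_inv ℝ) hs.uniqueDiffOn hxs
    (n := n) le_top
  refine hmul.trans ?_
  rw [Finset.sum_div]
  refine Finset.sum_le_sum fun i hi => ?_
  have h1 : ‖iteratedFDerivWithin ℝ i Real.sin s x‖ ≤ 1 := by
    rw [iteratedFDerivWithin_of_isOpen (𝕜 := ℝ) i hs hxs,
      norm_iteratedFDeriv_eq_norm_iteratedDeriv, Real.norm_eq_abs]
    exact abs_iteratedDeriv_sin_le i x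
  have h2 : ‖iteratedFDerivWithin ℝ (n - i) (Inv.inv : ℝ → ℝ) s x‖ ≤
      ((n - i).factorial : ℝ) / |x| := by
    rw [iteratedFDerivWithin_of_isOpen (𝕜 := ℝ) (n - i) hs hxs,
      norm_iteratedFDeriv_eq_norm_iteratedDeriv, Real.norm_eq_abs]
    exact abs_iteratedDeriv_inv_le (n - i) hx
  have hc : (0:ℝ) ≤ (n.choose i : ℝ) := Nat.cast_nonneg _
  have hn1 : ‖iteratedFDerivWithin ℝ i Real.sin s x‖ ≥ 0 := norm_nonneg _
  calc (n.choose i : ℝ) * ‖iteratedFDerivWithin ℝ i Real.sin s x‖ *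
        ‖iteratedFDerivWithin ℝ (n - i) (Inv.inv : ℝ → ℝ) s x‖
      ≤ (n.choose i : ℝ) * 1 * (((n - i).factorial : ℝ) / |x|) := by
        apply mul_le_mul (mul_le_mul_of_nonneg_left h1 hc) h2 (norm_nonneg _)
        positivity
    _ = (n.choose i : ℝ) * ((n - i).factorial : ℝ) / |x| := by ring

theorem stmt_2 (n : ℕ) :
    (∃ C : ℝ, ∀ x : ℝ, |iteratedDeriv n sinc x| ≤ C) ∧
      Tendsto (iteratedDeriv n sinc) atTop (nhds 0) ∧
      Tendsto (iteratedDeriv n sinc) atBot (nhds 0) := by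
  set K : ℝ := ∑ i ∈ Finset.range (n+1), (n.choose i : ℝ) * ((n - i).factorial : ℝ) with hK
  have hK0 : 0 ≤ K := by positivity
  have hcont : Continuous (iteratedDeriv n sinc) :=
    contDiff_sinc.continuous_iteratedDeriv n le_top
  constructor
  · obtain ⟨C, hC⟩ := isCompact_Icc.exists_bound_of_continuousOn
      (s := Set.Icc (-1:ℝ) 1) hcont.continuousOn
    refine ⟨max C K, fun x => ?_⟩
    rcases le_or_gt (|x|) 1 with h | h
    · have hxI : x ∈ Set.Icc (-1:ℝ) 1 := abs_le.mp h
      exact le_trans (hC x hxI) (le_max_left _ _)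
    · refine le_trans (key_bound n h.le) (le_trans ?_ (le_max_right _ _))
      exact div_le_self hK0 h.le
  · have ha1 : Tendsto (fun x : ℝ => |x|) atTop atTop := tendsto_abs_atTop_atTop
    have ha2 : Tendsto (fun x : ℝ => |x|) atBot atTop := tendsto_abs_atBot_atTop
    have hi : Tendsto (fun y : ℝ => y⁻¹) atTop (nhds 0) := tendsto_inv_atTop_zero
    have hdiv : Tendsto (fun x : ℝ => K / |x|) atTop (nhds 0) := by
      have h := (hi.comp ha1).const_mul K
      simpa [div_eq_mul_inv, Function.comp] using h
    have hdiv' : Tendsto (fun x : ℝ => K / |x|) atBot (nhds 0) := by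
      have h := (hi.comp ha2).const_mul K
      simpa [div_eq_mul_inv, Function.comp] using h
    constructor
    · refine squeeze_zero_norm' ?_ hdiv
      filter_upwards [eventually_ge_atTop (1:ℝ)] with x hx1
      exact key_bound n (le_trans hx1 (le_abs_self x))
    · refine squeeze_zero_norm' ?_ hdiv'
      filter_upwards [eventually_le_atBot (-1:ℝ)] with x hx1
      have : 1 ≤ |x| := by
        rw [abs_of_nonpos (by linarith)]; linarith
      exact key_bound n this
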